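/- If X₁ and (X₂,…,X_d) are independent, each X_i (i ≥ 2) is integrable, and X₁ has a bounded continuous density f, then the function φ(t, x₂,…,x_d) = f(t) is a conditional density of X₁ given (X₂,…,X_d) satisfying Assumption A on any open set U ⊆ (ℝ∖{0}) × ℝ^{d−1}: in particular, (t,u) ↦ E[f(u₁⁻¹(t − Σ_{j=2}^d u_j X_j))] and (t,u) ↦ E[X_i · f(u₁⁻¹(t − Σ_{j=2}^d u_j X_j))] are finite-valued and jointly continuous on ℝ × U. -/

import Mathlib

open MeasureTheory

/-- `φ` is a conditional density of `X₁` given the vector `Y = (X₂,…,X_d)`. -/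
def IsCondDensity {Ω : Type*} [MeasurableSpace Ω] (μ : Measure Ω)
    {m : ℕ} (X1 : Ω → ℝ) (Y : Ω → (Fin m → ℝ)) (φ : ℝ → (Fin m → ℝ) → ℝ) : Prop :=
  Measurable (Function.uncurry φ) ∧ (∀ t x, 0 ≤ φ t x) ∧
    ∀ A : Set ℝ, MeasurableSet A → ∀ B : Set (Fin m → ℝ), MeasurableSet B →
      (μ {ω | X1 ω ∈ A ∧ Y ω ∈ B}).toReal
        = ∫ ω in {ω | Y ω ∈ B}, ∫ t in A, φ t (Y ω) ∂(volume) ∂μ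

/-- The weighted sum `Z(u) = u₁ X₁ + Σ_{j≥2} u_j X_j` for the weight vector `p = (u₁, (u_j))`. -/
noncomputable def Zw {Ω : Type*} {m : ℕ} (X1 : Ω → ℝ) (Y : Ω → (Fin m → ℝ))
    (p : ℝ × (Fin m → ℝ)) (ω : Ω) : ℝ :=
  p.1 * X1 ω + ∑ i, p.2 i * Y ω i

/-- The distribution function `F(z, u) = P(Z(u) ≤ z)`. -/
noncomputable def Fcdf {Ω : Type*} [MeasurableSpace Ω] (μ : Measure Ω)
    {m : ℕ} (X1 : Ω → ℝ) (Y : Ω → (Fin m → ℝ)) (z : ℝ) (p : ℝ × (Fin m → ℝ)) : ℝ :=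
  (μ {ω | Zw X1 Y p ω ≤ z}).toReal

/-- `E[φ(u₁⁻¹(t - Σ_{j≥2} u_j X_j), X₂,…,X_d)]`. -/
noncomputable def densNum {Ω : Type*} [MeasurableSpace Ω] (μ : Measure Ω)
    {m : ℕ} (Y : Ω → (Fin m → ℝ)) (φ : ℝ → (Fin m → ℝ) → ℝ)
    (t : ℝ) (p : ℝ × (Fin m → ℝ)) : ℝ :=
  ∫ ω, φ (p.1⁻¹ * (t - ∑ i, p.2 i * Y ω i)) (Y ω) ∂μ

/-- `E[X_i φ(u₁⁻¹(t - Σ_{j≥2} u_j X_j), X₂,…,X_d)]` for `i ≥ 2`. -/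
noncomputable def densNumX {Ω : Type*} [MeasurableSpace Ω] (μ : Measure Ω)
    {m : ℕ} (Y : Ω → (Fin m → ℝ)) (φ : ℝ → (Fin m → ℝ) → ℝ) (i : Fin m)
    (t : ℝ) (p : ℝ × (Fin m → ℝ)) : ℝ :=
  ∫ ω, Y ω i * φ (p.1⁻¹ * (t - ∑ j, p.2 j * Y ω j)) (Y ω) ∂μ

/-- Assumption A from the paper, on the open set `U ⊆ (ℝ∖{0}) × ℝ^{d-1}`:
(i) `t ↦ φ(t,x)` is continuous; (ii) `(t,u) ↦ E[φ(u₁⁻¹(t - Σ u_j X_j), X₂,…,X_d)]`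
is finite-valued and jointly continuous on `ℝ × U`; (iii) likewise for
`(t,u) ↦ E[X_i φ(u₁⁻¹(t - Σ u_j X_j), X₂,…,X_d)]`, `i = 2,…,d`. -/
def AssumptionA {Ω : Type*} [MeasurableSpace Ω] (μ : Measure Ω)
    {m : ℕ} (X1 : Ω → ℝ) (Y : Ω → (Fin m → ℝ)) (φ : ℝ → (Fin m → ℝ) → ℝ)
    (U : Set (ℝ × (Fin m → ℝ))) : Prop :=
  IsOpen U ∧ (∀ p ∈ U, p.1 ≠ 0) ∧
  (∀ x, Continuous fun t => φ t x) ∧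
  (∀ (t : ℝ), ∀ p ∈ U, Integrable (fun ω => φ (p.1⁻¹ * (t - ∑ i, p.2 i * Y ω i)) (Y ω)) μ) ∧
  ContinuousOn (fun q : ℝ × (ℝ × (Fin m → ℝ)) => densNum μ Y φ q.1 q.2) (Set.univ ×ˢ U) ∧
  (∀ i : Fin m, ∀ (t : ℝ), ∀ p ∈ U,
    Integrable (fun ω => Y ω i * φ (p.1⁻¹ * (t - ∑ j, p.2 j * Y ω j)) (Y ω)) μ) ∧
  (∀ i : Fin m,
    ContinuousOn (fun q : ℝ × (ℝ × (Fin m → ℝ)) => densNumX μ Y φ i q.1 q.2) (Set.univ ×ˢ U))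

/-- Remark 2.4(4): if `X₁` is independent of `(X₂,…,X_d)`, each `X_i` (`i ≥ 2`) is integrable,
and `X₁` has a bounded continuous density `f`, then `φ(t, x₂,…,x_d) = f(t)` is a conditional
density of `X₁` given `(X₂,…,X_d)` satisfying Assumption A on any open
`U ⊆ (ℝ∖{0}) × ℝ^{d-1}`; in particular `(t,u) ↦ E[f(u₁⁻¹(t - Σ u_j X_j))]` and
`(t,u) ↦ E[X_i f(u₁⁻¹(t - Σ u_j X_j))]` are finite-valued and jointly continuous on `ℝ × U`. -/
theorem stmt16 {Ω : Type*} [MeasurableSpace Ω] (μ : Measure Ω) [IsProbabilityMeasure μ]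
    (m : ℕ) (hm : 1 ≤ m)
    (X1 : Ω → ℝ) (Y : Ω → (Fin m → ℝ)) (hX1 : Measurable X1) (hY : Measurable Y)
    (hindep : ProbabilityTheory.IndepFun X1 Y μ)
    (hYint : ∀ i, Integrable (fun ω => Y ω i) μ)
    (f : ℝ → ℝ) (hf0 : ∀ t, 0 ≤ f t) (hfc : Continuous f)
    (C : ℝ) (hfb : ∀ t, f t ≤ C)
    (hfdens : ∀ A : Set ℝ, MeasurableSet A →
      (μ {ω | X1 ω ∈ A}).toReal = ∫ t in A, f t ∂(volume)) :
    IsCondDensity μ X1 Y (fun t _ => f t) ∧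
    ∀ U : Set (ℝ × (Fin m → ℝ)), IsOpen U → (∀ p ∈ U, p.1 ≠ 0) →
      AssumptionA μ X1 Y (fun t _ => f t) U := by
  have hC0 : 0 ≤ C := le_trans (hf0 0) (hfb 0)
  have hfabs : ∀ t, ‖f t‖ ≤ C := fun t => by
    rw [Real.norm_eq_abs, abs_of_nonneg (hf0 t)]; exact hfb t
  have hSmeas : ∀ (c : Fin m → ℝ), Measurable (fun ω => ∑ i, c i * Y ω i) :=
    fun c => Finset.measurable_sum _ fun i _ =>
      ((measurable_pi_apply i).comp hY).const_mul (c i)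
  have hgmeas : ∀ (t : ℝ) (p : ℝ × (Fin m → ℝ)),
      Measurable (fun ω => f (p.1⁻¹ * (t - ∑ i, p.2 i * Y ω i))) := fun t p =>
    hfc.measurable.comp (((hSmeas p.2).const_sub t).const_mul p.1⁻¹)
  have hgint : ∀ (t : ℝ) (p : ℝ × (Fin m → ℝ)),
      Integrable (fun ω => f (p.1⁻¹ * (t - ∑ i, p.2 i * Y ω i))) μ := fun t p =>
    (integrable_const C).mono' (hgmeas t p).aestronglyMeasurable
      (Filter.Eventually.of_forall fun ω => hfabs _)
  have hgXint : ∀ (i : Fin m) (t : ℝ) (p : ℝ × (Fin m → ℝ)),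
      Integrable (fun ω => Y ω i * f (p.1⁻¹ * (t - ∑ j, p.2 j * Y ω j))) μ := by
    intro i t p
    refine ((hYint i).norm.mul_const C).mono'
      ((((measurable_pi_apply i).comp hY).mul (hgmeas t p)).aestronglyMeasurable)
      (Filter.Eventually.of_forall fun ω => ?_)
    rw [norm_mul]
    exact mul_le_mul_of_nonneg_left (hfabs _) (norm_nonneg _)
  -- continuity of the inner map at points with first coordinate nonzero
  have hinner : ∀ (ω : Ω) (q₀ : ℝ × (ℝ × (Fin m → ℝ))), q₀.2.1 ≠ 0 →
      ContinuousAt (fun q : ℝ × (ℝ × (Fin m → ℝ)) =>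
        f (q.2.1⁻¹ * (q.1 - ∑ i, q.2.2 i * Y ω i))) q₀ := by
    intro ω q₀ hne
    apply hfc.continuousAt.comp
    apply ContinuousAt.mul
    · exact ((continuous_fst.comp continuous_snd).continuousAt).inv₀ hne
    · exact (continuous_fst.sub (continuous_finset_sum _ fun i _ =>
        (((continuous_apply i).comp (continuous_snd.comp continuous_snd)).mul
          continuous_const))).continuousAt
  constructor
  · refine ⟨?_, fun t x => hf0 t, ?_⟩
    · exact hfc.measurable.comp measurable_fst
    · intro A hA B hB
      have h1 : {ω | X1 ω ∈ A ∧ Y ω ∈ B} = X1 ⁻¹' A ∩ Y ⁻¹' B := rfl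
      have h2 : {ω | Y ω ∈ B} = Y ⁻¹' B := rfl
      rw [h1, h2, hindep.measure_inter_preimage_eq_mul A B hA hB,
        integral_const, ENNReal.toReal_mul]
      have := hfdens A hA
      have h3 : {ω | X1 ω ∈ A} = X1 ⁻¹' A := rfl
      rw [h3] at this
      rw [measureReal_def, Measure.restrict_apply_univ, ← this, smul_eq_mul, mul_comm]
  · intro U hU hU'
    refine ⟨hU, hU', fun x => hfc, fun t p _ => hgint t p, ?_, fun i t p _ => hgXint i t p, ?_⟩
    · intro q hq
      simp only [Set.mem_prod, Set.mem_univ, true_and] at hq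
      refine (continuousAt_of_dominated
        (Filter.Eventually.of_forall fun (q' : ℝ × (ℝ × (Fin m → ℝ))) => (hgmeas q'.1 q'.2).aestronglyMeasurable)
        (Filter.Eventually.of_forall fun (q' : ℝ × (ℝ × (Fin m → ℝ))) =>
          Filter.Eventually.of_forall fun ω => hfabs _)
        (integrable_const C)
        (Filter.Eventually.of_forall fun ω => hinner ω q (hU' q.2 hq))).continuousWithinAt
    · intro i q hq
      simp only [Set.mem_prod, Set.mem_univ, true_and] at hq
      refine (continuousAt_of_dominated
        (Filter.Eventually.of_forall fun (q' : ℝ × (ℝ × (Fin m → ℝ))) =>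
          ((((measurable_pi_apply i).comp hY).mul (hgmeas q'.1 q'.2)).aestronglyMeasurable))
        (Filter.Eventually.of_forall fun (q' : ℝ × (ℝ × (Fin m → ℝ))) =>
          Filter.Eventually.of_forall fun ω => ?_)
        ((hYint i).norm.mul_const C)
        (Filter.Eventually.of_forall fun ω =>
          ((continuous_apply i).continuousAt.comp continuousAt_const).mul
            (hinner ω q (hU' q.2 hq)))).continuousWithinAt
      rw [Pi.mul_apply, norm_mul]
      exact mul_le_mul_of_nonneg_left (hfabs _) (norm_nonneg _)
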